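/- Let (N, M, {v_i}) be a fair division instance with n agents, m goods, and additive valuations, and let (N, {1,…,m}, {v'_i}) be its ordered counterpart. Let A' = (A'_1,…,A'_n) be a simple allocation with copies of the virtual goods with t ≤ n/2 distinct copies: each A'_j ⊆ {1,…,m}, the virtual goods belonging to two bundles are exactly 1,…,t, no virtual good belongs to more than two bundles, and there exist 2t pairwise distinct agents i_1,…,i_t, i†_1,…,i†_t such that A'_{i_j} ∩ A'_{i†_j} = {j} for every j ∈ {1,…,t}. Then there exists an allocation with copies A = (A_1,…,A_n) of the original goods M such that each good of M belongs to at most two bundles, at most t goods belong to two bundles, and v_i(A_i) ≥ Σ_{j ∈ A'_i} v'_i(j) for every agent i. -/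

import Mathlib

open Finset


set_option linter.unusedSectionVars false

section Aux

variable {G : Type*} [Fintype G] [DecidableEq G] {n : ℕ}

/-- multiplicity of a good in an allocation with copies -/
def pmult (A : Fin n → Finset G) (g : G) : ℕ := (Finset.univ.filter fun i => g ∈ A i).card

/-- duplicated goods -/
def pdups (A : Fin n → Finset G) : Finset G := Finset.univ.filter fun g => pmult A g = 2

lemma pmult_eq_sum (A : Fin n → Finset G) (g : G) :
    pmult A g = ∑ i, if g ∈ A i then 1 else 0 := by
  rw [pmult, Finset.card_filter]

lemma card_eq_sum_ind (s : Finset G) : s.card = ∑ g, if g ∈ s then 1 else 0 := by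
  rw [← Finset.filter_univ_mem s, Finset.card_filter]
  simp

lemma sum_card_eq_sum_pmult (A : Fin n → Finset G) :
    ∑ i, (A i).card = ∑ g, pmult A g := by
  simp_rw [pmult_eq_sum, card_eq_sum_ind]
  exact Finset.sum_comm

lemma pmult_zero_not_mem {A : Fin n → Finset G} {g : G} (h : pmult A g = 0) (i : Fin n) :
    g ∉ A i := by
  intro hmem
  have : i ∈ Finset.univ.filter fun i => g ∈ A i := by simp [hmem]
  rw [Finset.card_eq_zero.mp h] at this
  simp at this

lemma mem_update_insert {A : Fin n → Finset G} {i i' : Fin n} {g0 g : G} :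
    g ∈ Function.update A i (insert g0 (A i)) i' ↔ (g ∈ A i' ∨ (i' = i ∧ g = g0)) := by
  rcases eq_or_ne i' i with rfl | h
  · simp only [Function.update_self, Finset.mem_insert]
    tauto
  · simp [Function.update_of_ne h, h]

lemma pmult_update_self {A : Fin n → Finset G} {i : Fin n} {g0 : G} (hg0 : g0 ∉ A i) :
    pmult (Function.update A i (insert g0 (A i))) g0 = pmult A g0 + 1 := by
  unfold pmult
  have hset : (Finset.univ.filter fun i' => g0 ∈ Function.update A i (insert g0 (A i)) i')
      = insert i (Finset.univ.filter fun i' => g0 ∈ A i') := by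
    ext i'
    simp only [Finset.mem_filter, Finset.mem_univ, true_and, Finset.mem_insert,
      mem_update_insert]
    tauto
  rw [hset, Finset.card_insert_of_notMem (by simp [hg0])]

lemma pmult_update_other {A : Fin n → Finset G} {i : Fin n} {g0 g : G} (hne : g ≠ g0) :
    pmult (Function.update A i (insert g0 (A i))) g = pmult A g := by
  unfold pmult
  congr 1
  ext i'
  simp [mem_update_insert, hne]

lemma pmult_update_le_two {A : Fin n → Finset G} {i : Fin n} {g0 : G} (hg0 : g0 ∉ A i)
    (h1 : pmult A g0 ≤ 1) (h2 : ∀ g, pmult A g ≤ 2) (g : G) :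
    pmult (Function.update A i (insert g0 (A i))) g ≤ 2 := by
  rcases eq_or_ne g g0 with rfl | hne
  · rw [pmult_update_self hg0]; omega
  · rw [pmult_update_other hne]; exact h2 g

lemma pdups_update_subset {A : Fin n → Finset G} {i : Fin n} {g0 : G} :
    pdups (Function.update A i (insert g0 (A i))) ⊆ insert g0 (pdups A) := by
  intro g hg
  simp only [pdups, Finset.mem_filter, Finset.mem_univ, true_and] at hg
  rcases eq_or_ne g g0 with rfl | hne
  · exact Finset.mem_insert_self _ _
  · rw [pmult_update_other hne] at hg
    exact Finset.mem_insert_of_mem (by simp [pdups, hg])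

lemma pdups_update_fresh {A : Fin n → Finset G} {i : Fin n} {g0 : G}
    (h0 : pmult A g0 = 0) :
    pdups (Function.update A i (insert g0 (A i))) = pdups A := by
  have hg0 : g0 ∉ A i := pmult_zero_not_mem h0 i
  ext g
  simp only [pdups, Finset.mem_filter, Finset.mem_univ, true_and]
  rcases eq_or_ne g g0 with rfl | hne
  · rw [pmult_update_self hg0, h0]
    omega
  · rw [pmult_update_other hne]

lemma sum_card_update {A : Fin n → Finset G} {i : Fin n} {g0 : G} (hg0 : g0 ∉ A i) :
    ∑ i', ((Function.update A i (insert g0 (A i))) i').card = (∑ i', (A i').card) + 1 := by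
  rw [← Finset.add_sum_erase Finset.univ (fun i' => ((Function.update A i (insert g0 (A i))) i').card) (Finset.mem_univ i),
    ← Finset.add_sum_erase Finset.univ (fun i' => (A i').card) (Finset.mem_univ i)]
  have h1 : ((Function.update A i (insert g0 (A i))) i).card = (A i).card + 1 := by
    rw [Function.update_self, Finset.card_insert_of_notMem hg0]
  have h2 : ∑ i' ∈ Finset.univ.erase i, ((Function.update A i (insert g0 (A i))) i').card
      = ∑ i' ∈ Finset.univ.erase i, (A i').card := by
    apply Finset.sum_congr rfl
    intro i' hi'
    rw [Function.update_of_ne (Finset.ne_of_mem_erase hi')]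
  rw [h1, h2]
  omega

lemma ones_add_pdups (A : Fin n → Finset G) (h2 : ∀ g, pmult A g ≤ 2) :
    (Finset.univ.filter fun g => 1 ≤ pmult A g).card + (pdups A).card = ∑ g, pmult A g := by
  rw [Finset.card_filter, pdups, Finset.card_filter, ← Finset.sum_add_distrib]
  apply Finset.sum_congr rfl
  intro g _
  have := h2 g
  interval_cases (pmult A g) <;> simp

lemma two_pdups_le (A : Fin n → Finset G) :
    2 * (pdups A).card ≤ ∑ g, pmult A g := by
  calc 2 * (pdups A).card = ∑ _g ∈ pdups A, 2 := by
        rw [Finset.sum_const, smul_eq_mul, mul_comm]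
    _ = ∑ g ∈ pdups A, pmult A g :=
        Finset.sum_congr rfl (fun g hg => ((Finset.mem_filter.mp hg).2).symm)
    _ ≤ ∑ g, pmult A g := Finset.sum_le_sum_of_subset (Finset.subset_univ _)

lemma epick {m : ℕ} (w : G → ℝ) (σ : Fin m ≃ G)
    (hσ : ∀ j k : Fin m, j ≤ k → w (σ k) ≤ w (σ j))
    (j : Fin m) (F : Finset G) (hF : F.card ≤ (j : ℕ)) :
    ∃ g, g ∉ F ∧ w (σ j) ≤ w g := by
  set T : Finset G := (Finset.univ.filter fun j' => j' ≤ j).image σ with hT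
  have hTcard : T.card = (j : ℕ) + 1 := by
    rw [hT, Finset.card_image_of_injective _ σ.injective]
    have : (Finset.univ.filter fun j' : Fin m => j' ≤ j) = Finset.Iic j := by
      ext x; simp
    rw [this, Fin.card_Iic]
  have hne : (T \ F).Nonempty := by
    rw [Finset.sdiff_nonempty]
    intro hsub
    have := Finset.card_le_card hsub
    omega
  obtain ⟨g, hg⟩ := hne
  rw [Finset.mem_sdiff] at hg
  obtain ⟨hgT, hgF⟩ := hg
  rw [hT, Finset.mem_image] at hgT
  obtain ⟨j', hj', rfl⟩ := hgT
  rw [Finset.mem_filter] at hj'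
  exact ⟨_, hgF, hσ j' j hj'.2⟩

end Aux


/-- Reduction to ordered instances for simple allocations. Given an additive
instance (weights `w i`) with orderings `σ i` of the goods by non-increasing value, and a
simple allocation with copies `A'` of the virtual goods with `t ≤ n/2` distinct copies
(the duplicated virtual goods being exactly the top `t` goods, no virtual good in more than
two bundles, and the two instances of the `j`-th duplicated good held by `2t` pairwise
distinct agents), there is an allocation with copies `A` of the original goods in which each
good belongs to at most two bundles, at most `t` goods belong to two bundles, and
`v_i(A_i) ≥ Σ_{j ∈ A'_i} v'_i(j)` for every agent `i`. -/
theorem stmt10 {G : Type*} [Fintype G] [DecidableEq G] (n : ℕ)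
    (w : Fin n → G → ℝ) (hw : ∀ i g, 0 ≤ w i g)
    (σ : Fin n → (Fin (Fintype.card G) ≃ G))
    (hσ : ∀ i, ∀ j k : Fin (Fintype.card G), j ≤ k → w i (σ i k) ≤ w i (σ i j))
    (t : ℕ) (ht : 2 * t ≤ n) (htm : t ≤ Fintype.card G)
    (A' : Fin n → Finset (Fin (Fintype.card G)))
    (hcopies : ∀ j : Fin (Fintype.card G),
      (Finset.univ.filter fun i => j ∈ A' i).card ≤ 2)
    (hdup : ∀ j : Fin (Fintype.card G),
      (Finset.univ.filter fun i => j ∈ A' i).card = 2 ↔ (j : ℕ) < t)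
    (hpair : ∃ f : Fin t ⊕ Fin t → Fin n, Function.Injective f ∧
      ∀ j : Fin t, A' (f (Sum.inl j)) ∩ A' (f (Sum.inr j)) = {Fin.castLE htm j}) :
    ∃ A : Fin n → Finset G,
      (∀ g : G, (Finset.univ.filter fun i => g ∈ A i).card ≤ 2) ∧
      ((Finset.univ.filter fun g : G =>
        (Finset.univ.filter fun i => g ∈ A i).card = 2).card ≤ t) ∧
      (∀ i, ∑ j ∈ A' i, w i (σ i j) ≤ ∑ g ∈ A i, w i g) := by
  classical
  obtain ⟨f, hfinj, hfpair⟩ := hpair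
  -- both members of a pair hold the duplicated virtual good
  have hmem : ∀ jt : Fin t, Fin.castLE htm jt ∈ A' (f (Sum.inl jt)) ∧
      Fin.castLE htm jt ∈ A' (f (Sum.inr jt)) := by
    intro jt
    have h : Fin.castLE htm jt ∈ A' (f (Sum.inl jt)) ∩ A' (f (Sum.inr jt)) := by
      rw [hfpair jt]; exact Finset.mem_singleton_self _
    exact ⟨(Finset.mem_inter.mp h).1, (Finset.mem_inter.mp h).2⟩
  have hab : ∀ jt : Fin t, f (Sum.inl jt) ≠ f (Sum.inr jt) := by
    intro jt h
    simpa using hfinj h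
  -- the holders of a duplicated virtual good are exactly the pair
  have holders_eq : ∀ jt : Fin t,
      (Finset.univ.filter fun i => Fin.castLE htm jt ∈ A' i)
        = {f (Sum.inl jt), f (Sum.inr jt)} := by
    intro jt
    have hsub : ({f (Sum.inl jt), f (Sum.inr jt)} : Finset (Fin n)) ⊆
        Finset.univ.filter fun i => Fin.castLE htm jt ∈ A' i := by
      intro i hi
      simp only [Finset.mem_insert, Finset.mem_singleton] at hi
      rcases hi with rfl | rfl
      · simp [(hmem jt).1]
      · simp [(hmem jt).2]
    have hcard2 : (Finset.univ.filter fun i => Fin.castLE htm jt ∈ A' i).card = 2 :=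
      (hdup _).mpr (by simpa using jt.isLt)
    have hcardp : ({f (Sum.inl jt), f (Sum.inr jt)} : Finset (Fin n)).card = 2 :=
      Finset.card_pair (hab jt)
    exact (Finset.eq_of_subset_of_card_le hsub (le_of_eq (hcard2.trans hcardp.symm))).symm
  -- each agent holds at most one duplicated virtual good
  have uniq : ∀ (i : Fin n) (j1 j2 : Fin (Fintype.card G)), (j1 : ℕ) < t → (j2 : ℕ) < t →
      j1 ∈ A' i → j2 ∈ A' i → j1 = j2 := by
    intro i j1 j2 h1 h2 m1 m2
    have e1 : Fin.castLE htm ⟨(j1 : ℕ), h1⟩ = j1 := rfl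
    have e2 : Fin.castLE htm ⟨(j2 : ℕ), h2⟩ = j2 := rfl
    have hi1 : i ∈ ({f (Sum.inl ⟨(j1 : ℕ), h1⟩), f (Sum.inr ⟨(j1 : ℕ), h1⟩)} : Finset (Fin n)) := by
      rw [← holders_eq]
      simp [e1, m1]
    have hi2 : i ∈ ({f (Sum.inl ⟨(j2 : ℕ), h2⟩), f (Sum.inr ⟨(j2 : ℕ), h2⟩)} : Finset (Fin n)) := by
      rw [← holders_eq]
      simp [e2, m2]
    simp only [Finset.mem_insert, Finset.mem_singleton] at hi1 hi2
    apply Fin.ext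
    rcases hi1 with h1' | h1' <;> rcases hi2 with h2' | h2' <;>
      · have h := hfinj (h1'.symm.trans h2')
        simp -failIfUnchanged only [Sum.inl.injEq, Sum.inr.injEq, Fin.mk.injEq] at h
        first
          | exact h
          | exact absurd h (by simp)
  -- bundle-size bound past the duplicated range
  have hflt : ∀ (kk : ℕ) (i : Fin n), t ≤ kk →
      ((A' i).filter fun j : Fin (Fintype.card G) => (j : ℕ) < kk).card ≤ 1 + (kk - t) := by
    intro kk i htk
    have hsub : (A' i).filter (fun j : Fin (Fintype.card G) => (j : ℕ) < kk) ⊆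
        ((A' i).filter fun j : Fin (Fintype.card G) => (j : ℕ) < t) ∪
          ((A' i).filter fun j : Fin (Fintype.card G) => t ≤ (j : ℕ) ∧ (j : ℕ) < kk) := by
      intro j hj
      rw [Finset.mem_filter] at hj
      rw [Finset.mem_union, Finset.mem_filter, Finset.mem_filter]
      rcases lt_or_ge (j : ℕ) t with h | h
      · exact Or.inl ⟨hj.1, h⟩
      · exact Or.inr ⟨hj.1, h, hj.2⟩
    have h1 : ((A' i).filter fun j : Fin (Fintype.card G) => (j : ℕ) < t).card ≤ 1 := by
      rw [Finset.card_le_one]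
      intro a ha b hb
      rw [Finset.mem_filter] at ha hb
      exact uniq i a b ha.2 hb.2 ha.1 hb.1
    have h2 : ((A' i).filter fun j : Fin (Fintype.card G) => t ≤ (j : ℕ) ∧ (j : ℕ) < kk).card ≤ kk - t := by
      have hinj : Set.InjOn (fun j : Fin (Fintype.card G) => (j : ℕ))
          ((A' i).filter fun j : Fin (Fintype.card G) => t ≤ (j : ℕ) ∧ (j : ℕ) < kk) := by
        intro a _ b _ h
        exact Fin.ext h
      have := Finset.card_le_card_of_injOn (fun j : Fin (Fintype.card G) => (j : ℕ))
        (fun j hj => by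
          rw [Finset.mem_coe, Finset.mem_filter] at hj
          rw [Finset.mem_coe, Finset.mem_Ico]
          exact hj.2) hinj
      simpa [Nat.card_Ico] using this
    have h3 := Finset.card_le_card hsub
    have h4 := Finset.card_union_le ((A' i).filter fun j : Fin (Fintype.card G) => (j : ℕ) < t)
      ((A' i).filter fun j : Fin (Fintype.card G) => t ≤ (j : ℕ) ∧ (j : ℕ) < kk)
    omega
  -- total number of picks bound
  have hPbound : ∀ (kk : ℕ) (A : Fin n → Finset G),
      (∀ i, (A i).card ≤ ((A' i).filter fun j : Fin (Fintype.card G) => (j : ℕ) < kk).card) →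
      ∑ i, (A i).card ≤ kk + min kk t := by
    intro kk A hA
    have step1 : ∑ i, (A i).card ≤ ∑ i, ((A' i).filter fun j : Fin (Fintype.card G) => (j : ℕ) < kk).card :=
      Finset.sum_le_sum fun i _ => hA i
    have step2 : ∑ i, ((A' i).filter fun j : Fin (Fintype.card G) => (j : ℕ) < kk).card
        = ∑ j ∈ Finset.univ.filter (fun j : Fin (Fintype.card G) => (j : ℕ) < kk),
            (Finset.univ.filter fun i => j ∈ A' i).card := by
      have e1 : ∀ i : Fin n, ((A' i).filter fun j : Fin (Fintype.card G) => (j : ℕ) < kk).card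
          = ∑ j : Fin (Fintype.card G), if j ∈ A' i ∧ (j : ℕ) < kk then 1 else 0 := by
        intro i
        rw [show (A' i).filter (fun j : Fin (Fintype.card G) => (j : ℕ) < kk)
            = Finset.univ.filter (fun j : Fin (Fintype.card G) => j ∈ A' i ∧ (j : ℕ) < kk) by ext j; simp,
          Finset.card_filter]
      simp_rw [e1]
      rw [Finset.sum_comm, Finset.sum_filter]
      apply Finset.sum_congr rfl
      intro j _
      rw [Finset.card_filter]
      by_cases h : (j : ℕ) < kk
      · simp [h]
      · simp [h]
    have step3 : ∀ j : Fin (Fintype.card G),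
        (Finset.univ.filter fun i => j ∈ A' i).card ≤ 1 + if (j : ℕ) < t then 1 else 0 := by
      intro j
      by_cases h : (j : ℕ) < t
      · simpa [h] using hcopies j
      · have h2 := hcopies j
        have h3 : ¬((Finset.univ.filter fun i => j ∈ A' i).card = 2) :=
          fun hc => h ((hdup j).mp hc)
        simp only [h, if_false]
        omega
    set S : Finset (Fin (Fintype.card G)) :=
      Finset.univ.filter (fun j : Fin (Fintype.card G) => (j : ℕ) < kk) with hS
    have step4 : ∑ j ∈ S, (Finset.univ.filter fun i => j ∈ A' i).card
        ≤ ∑ j ∈ S, (1 + if (j : ℕ) < t then 1 else 0) :=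
      Finset.sum_le_sum fun j _ => step3 j
    have step5 : ∑ j ∈ S, (1 + if (j : ℕ) < t then 1 else 0)
        = S.card + (S.filter fun j : Fin (Fintype.card G) => (j : ℕ) < t).card := by
      rw [Finset.sum_add_distrib, ← Finset.card_filter]
      simp
    have hScard : S.card ≤ kk := by
      have hinj : Set.InjOn (fun j : Fin (Fintype.card G) => (j : ℕ)) S := by
        intro a _ b _ h
        exact Fin.ext h
      have := Finset.card_le_card_of_injOn (fun j : Fin (Fintype.card G) => (j : ℕ))
        (fun j hj => by
          rw [hS, Finset.mem_coe, Finset.mem_filter] at hj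
          rw [Finset.mem_coe, Finset.mem_range]
          exact hj.2) hinj
      simpa using this
    have hSt : (S.filter fun j : Fin (Fintype.card G) => (j : ℕ) < t).card ≤ min kk t := by
      refine le_min ?_ ?_
      · exact le_trans (Finset.card_le_card (Finset.filter_subset _ _)) hScard
      · have hinj : Set.InjOn (fun j : Fin (Fintype.card G) => (j : ℕ))
            (S.filter fun j : Fin (Fintype.card G) => (j : ℕ) < t) := by
          intro a _ b _ h
          exact Fin.ext h
        have := Finset.card_le_card_of_injOn (fun j : Fin (Fintype.card G) => (j : ℕ))
          (fun j hj => by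
            rw [Finset.mem_coe, Finset.mem_filter] at hj
            rw [Finset.mem_coe, Finset.mem_range]
            exact hj.2) hinj
        simpa using this
    omega
  -- main induction over prefixes of virtual goods
  have key : ∀ kk : ℕ, kk ≤ Fintype.card G → ∃ A : Fin n → Finset G,
      (∀ i, (A i).card ≤ ((A' i).filter fun j : Fin (Fintype.card G) => (j : ℕ) < kk).card) ∧
      (∀ g, pmult A g ≤ 2) ∧
      ((pdups A).card ≤ t) ∧
      (∀ i, ∑ j ∈ (A' i).filter (fun j : Fin (Fintype.card G) => (j : ℕ) < kk), w i (σ i j)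
        ≤ ∑ g ∈ A i, w i g) := by
    intro kk
    induction kk with
    | zero =>
      intro _
      refine ⟨fun _ => ∅, ?_, ?_, ?_, ?_⟩
      · intro i; simp
      · intro g; simp [pmult]
      · simp [pdups, pmult]
      · intro i; simp
    | succ k ih =>
      intro hk1
      obtain ⟨A, hI1, hI2, hI3, hI4⟩ := ih (Nat.le_of_succ_le hk1)
      have hk : k < Fintype.card G := hk1
      set jm : Fin (Fintype.card G) := ⟨k, hk⟩ with hjm
      have hfilter_not : ∀ i : Fin n, jm ∉ A' i →
          (A' i).filter (fun j : Fin (Fintype.card G) => (j : ℕ) < k + 1)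
            = (A' i).filter (fun j : Fin (Fintype.card G) => (j : ℕ) < k) := by
        intro i hi
        ext j
        simp only [Finset.mem_filter, and_congr_right_iff]
        intro hj
        constructor
        · intro h
          have hne : (j : ℕ) ≠ k := by
            intro he
            exact hi (by rwa [show j = jm from Fin.ext he] at hj)
          omega
        · omega
      have hfilter_mem : ∀ i : Fin n, jm ∈ A' i →
          (A' i).filter (fun j : Fin (Fintype.card G) => (j : ℕ) < k + 1)
            = insert jm ((A' i).filter (fun j : Fin (Fintype.card G) => (j : ℕ) < k)) := by
        intro i hi
        ext j
        simp only [Finset.mem_filter, Finset.mem_insert]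
        constructor
        · rintro ⟨hj, hlt⟩
          rcases Nat.lt_succ_iff_lt_or_eq.mp hlt with h | h
          · exact Or.inr ⟨hj, h⟩
          · exact Or.inl (Fin.ext h)
        · rintro (rfl | ⟨hj, hlt⟩)
          · exact ⟨hi, Nat.lt_succ_self k⟩
          · exact ⟨hj, by omega⟩
      have hjm_nf : ∀ i : Fin n,
          jm ∉ (A' i).filter (fun j : Fin (Fintype.card G) => (j : ℕ) < k) := by
        intro i h
        rw [Finset.mem_filter] at h
        exact absurd h.2 (by simp [hjm])
      have hmono : ∀ i : Fin n,
          ((A' i).filter (fun j : Fin (Fintype.card G) => (j : ℕ) < k)).card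
            ≤ ((A' i).filter (fun j : Fin (Fintype.card G) => (j : ℕ) < k + 1)).card := by
        intro i
        apply Finset.card_le_card
        intro j hj
        rw [Finset.mem_filter] at hj ⊢
        exact ⟨hj.1, by omega⟩
      by_cases hkt : k < t
      · -- pair step: virtual good k is duplicated
        set jt : Fin t := ⟨k, hkt⟩ with hjt
        have hjm_eq : Fin.castLE htm jt = jm := rfl
        have hane : f (Sum.inl jt) ≠ f (Sum.inr jt) := hab jt
        have hholders : (Finset.univ.filter fun i => jm ∈ A' i)
            = {f (Sum.inl jt), f (Sum.inr jt)} := by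
          rw [← hjm_eq]; exact holders_eq jt
        have haj : jm ∈ A' (f (Sum.inl jt)) := hjm_eq ▸ (hmem jt).1
        have hbj : jm ∈ A' (f (Sum.inr jt)) := hjm_eq ▸ (hmem jt).2
        have hempty : ∀ i : Fin n, jm ∈ A' i →
            ((A' i).filter fun j : Fin (Fintype.card G) => (j : ℕ) < k) = ∅ := by
          intro i hi
          apply Finset.eq_empty_of_forall_notMem
          intro j hj
          rw [Finset.mem_filter] at hj
          have hjt' : j = jm := uniq i j jm (by omega) (by simpa [hjm] using hkt) hj.1 hi
          have : (j : ℕ) = k := congrArg Fin.val hjt'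
          omega
        have hAa : A (f (Sum.inl jt)) = ∅ := by
          have := hI1 (f (Sum.inl jt))
          rw [hempty _ haj] at this
          simpa using Finset.card_eq_zero.mp (Nat.le_zero.mp this)
        have hAb : A (f (Sum.inr jt)) = ∅ := by
          have := hI1 (f (Sum.inr jt))
          rw [hempty _ hbj] at this
          simpa using Finset.card_eq_zero.mp (Nat.le_zero.mp this)
        have hsumA : ∑ i, (A i).card ≤ 2 * k := by
          have h1 := hPbound k A hI1
          have h2 : min k t = k := min_eq_left (le_of_lt hkt)
          omega
        have hdupsA : (pdups A).card ≤ k := by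
          have h1 := two_pdups_le A
          rw [← sum_card_eq_sum_pmult] at h1
          omega
        obtain ⟨ga, hgaD, hgaval⟩ := epick (w (f (Sum.inl jt))) (σ (f (Sum.inl jt)))
          (hσ (f (Sum.inl jt))) jm (pdups A) hdupsA
        have hgamult : pmult A ga ≤ 1 := by
          have h1 := hI2 ga
          have h2 : pmult A ga ≠ 2 := by
            intro h
            exact hgaD (by simp [pdups, h])
          omega
        have hgaA : ga ∉ A (f (Sum.inl jt)) := by rw [hAa]; simp
        set A1 := Function.update A (f (Sum.inl jt)) (insert ga (A (f (Sum.inl jt)))) with hA1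
        have hI2_1 : ∀ g, pmult A1 g ≤ 2 := pmult_update_le_two hgaA hgamult hI2
        have hsum1 : ∑ i, (A1 i).card = (∑ i, (A i).card) + 1 := sum_card_update hgaA
        have hdups1 : (pdups A1).card ≤ k := by
          have h1 := two_pdups_le A1
          rw [← sum_card_eq_sum_pmult] at h1
          omega
        have hA1b : A1 (f (Sum.inr jt)) = A (f (Sum.inr jt)) :=
          Function.update_of_ne hane.symm _ _
        have hA1a : A1 (f (Sum.inl jt)) = insert ga (A (f (Sum.inl jt))) :=
          Function.update_self _ _ _
        obtain ⟨gb, hgbD, hgbval⟩ := epick (w (f (Sum.inr jt))) (σ (f (Sum.inr jt)))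
          (hσ (f (Sum.inr jt))) jm (pdups A1) hdups1
        have hgbmult : pmult A1 gb ≤ 1 := by
          have h1 := hI2_1 gb
          have h2 : pmult A1 gb ≠ 2 := by
            intro h
            exact hgbD (by simp [pdups, h])
          omega
        have hgbA : gb ∉ A1 (f (Sum.inr jt)) := by rw [hA1b, hAb]; simp
        set A2 := Function.update A1 (f (Sum.inr jt)) (insert gb (A1 (f (Sum.inr jt)))) with hA2
        have hA2b : A2 (f (Sum.inr jt)) = insert gb (A1 (f (Sum.inr jt))) :=
          Function.update_self _ _ _
        have hA2a : A2 (f (Sum.inl jt)) = A1 (f (Sum.inl jt)) :=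
          Function.update_of_ne hane _ _
        have hI2_2 : ∀ g, pmult A2 g ≤ 2 := pmult_update_le_two hgbA hgbmult hI2_1
        have hsum2 : ∑ i, (A2 i).card = (∑ i, (A i).card) + 2 := by
          rw [sum_card_update hgbA, hsum1]
        have hI3_2 : (pdups A2).card ≤ t := by
          have h1 := two_pdups_le A2
          rw [← sum_card_eq_sum_pmult] at h1
          omega
        have hnotab : ∀ i : Fin n, i ≠ f (Sum.inl jt) → i ≠ f (Sum.inr jt) → jm ∉ A' i := by
          intro i hia hib hmem'
          have h1 : i ∈ Finset.univ.filter fun i => jm ∈ A' i := by simp [hmem']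
          rw [hholders] at h1
          simp only [Finset.mem_insert, Finset.mem_singleton] at h1
          tauto
        have hA2other : ∀ i : Fin n, i ≠ f (Sum.inl jt) → i ≠ f (Sum.inr jt) → A2 i = A i := by
          intro i hia hib
          rw [hA2, Function.update_of_ne hib, hA1, Function.update_of_ne hia]
        refine ⟨A2, ?_, hI2_2, hI3_2, ?_⟩
        · intro i
          by_cases hib : i = f (Sum.inr jt)
          · rw [hib, hA2b, Finset.card_insert_of_notMem hgbA, hA1b, hAb]
            have hsub : ({jm} : Finset (Fin (Fintype.card G))) ⊆
                (A' (f (Sum.inr jt))).filter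
                  (fun j : Fin (Fintype.card G) => (j : ℕ) < k + 1) := by
              intro x hx
              rw [Finset.mem_singleton] at hx
              subst hx
              rw [Finset.mem_filter]
              exact ⟨hbj, Nat.lt_succ_self k⟩
            have := Finset.card_le_card hsub
            simpa using this
          · by_cases hia : i = f (Sum.inl jt)
            · rw [hia, hA2a, hA1a, Finset.card_insert_of_notMem hgaA, hAa]
              have hsub : ({jm} : Finset (Fin (Fintype.card G))) ⊆
                  (A' (f (Sum.inl jt))).filter
                    (fun j : Fin (Fintype.card G) => (j : ℕ) < k + 1) := by
                intro x hx
                rw [Finset.mem_singleton] at hx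
                subst hx
                rw [Finset.mem_filter]
                exact ⟨haj, Nat.lt_succ_self k⟩
              have := Finset.card_le_card hsub
              simpa using this
            · rw [hA2other i hia hib]
              exact le_trans (hI1 i) (hmono i)
        · intro i
          by_cases hib : i = f (Sum.inr jt)
          · rw [hib, hfilter_mem _ hbj, hempty _ hbj,
              Finset.sum_insert (Finset.notMem_empty _), Finset.sum_empty, hA2b, hA1b, hAb]
            simpa using hgbval
          · by_cases hia : i = f (Sum.inl jt)
            · rw [hia, hfilter_mem _ haj, hempty _ haj,
                Finset.sum_insert (Finset.notMem_empty _), Finset.sum_empty, hA2a, hA1a, hAa]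
              simpa using hgaval
            · rw [hfilter_not i (hnotab i hia hib), hA2other i hia hib]
              exact hI4 i
      · -- single step: virtual good k is held by at most one agent
        have htk : t ≤ k := le_of_not_gt hkt
        have hcard1 : (Finset.univ.filter fun i => jm ∈ A' i).card ≤ 1 := by
          have h2 := hcopies jm
          have h3 : ¬((Finset.univ.filter fun i => jm ∈ A' i).card = 2) := by
            intro hc
            have := (hdup jm).mp hc
            simp [hjm] at this
            omega
          omega
        by_cases hH : ∃ i0, jm ∈ A' i0
        · obtain ⟨i0, hi0⟩ := hH
          have huniq_holder : ∀ i, jm ∈ A' i → i = i0 := by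
            intro i hi
            have h1 : i ∈ Finset.univ.filter fun i => jm ∈ A' i := by simp [hi]
            have h2 : i0 ∈ Finset.univ.filter fun i => jm ∈ A' i := by simp [hi0]
            exact Finset.card_le_one.mp hcard1 i h1 i0 h2
          have hbnd : (A i0).card ≤ 1 + (k - t) := le_trans (hI1 i0) (hflt k i0 htk)
          obtain ⟨g, hgA, hgmult, hgval, hdupfin⟩ :
              ∃ g, g ∉ A i0 ∧ pmult A g ≤ 1 ∧ w i0 (σ i0 jm) ≤ w i0 g ∧
                (pdups (Function.update A i0 (insert g (A i0)))).card ≤ t := by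
            by_cases hD : (pdups A).card < t
            · obtain ⟨g, hgF, hgval⟩ := epick (w i0) (σ i0) (hσ i0) jm (A i0 ∪ pdups A) (by
                have hun := Finset.card_union_le (A i0) (pdups A)
                have hv : (jm : ℕ) = k := rfl
                omega)
              have hgA : g ∉ A i0 := fun h => hgF (Finset.mem_union_left _ h)
              have hgD : g ∉ pdups A := fun h => hgF (Finset.mem_union_right _ h)
              have hgmult : pmult A g ≤ 1 := by
                have h1 := hI2 g
                have h2 : pmult A g ≠ 2 := by
                  intro h
                  exact hgD (by simp [pdups, h])
                omega
              refine ⟨g, hgA, hgmult, hgval, ?_⟩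
              have hsub := pdups_update_subset (A := A) (i := i0) (g0 := g)
              have h1 := Finset.card_le_card hsub
              have h2 := Finset.card_insert_le g (pdups A)
              omega
            · have hDt : t ≤ (pdups A).card := le_of_not_gt hD
              have hcnt := ones_add_pdups A hI2
              rw [← sum_card_eq_sum_pmult] at hcnt
              have hPA := hPbound k A hI1
              have hmin : min k t = t := min_eq_right htk
              obtain ⟨g, hgF, hgval⟩ := epick (w i0) (σ i0) (hσ i0) jm
                (Finset.univ.filter fun g => 1 ≤ pmult A g) (by
                  have hv : (jm : ℕ) = k := rfl
                  omega)
              have hg0 : pmult A g = 0 := by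
                by_contra h
                exact hgF (by simp only [Finset.mem_filter, Finset.mem_univ, true_and]; omega)
              refine ⟨g, pmult_zero_not_mem hg0 i0, by omega, hgval, ?_⟩
              rw [pdups_update_fresh hg0]
              exact hI3
          set A2 := Function.update A i0 (insert g (A i0)) with hA2
          have hA2i0 : A2 i0 = insert g (A i0) := Function.update_self _ _ _
          refine ⟨A2, ?_, pmult_update_le_two hgA hgmult hI2, hdupfin, ?_⟩
          · intro i
            by_cases hi : i = i0
            · subst hi
              rw [hA2i0, Finset.card_insert_of_notMem hgA]
              have h1 := hI1 i
              have h2 : ((A' i).filter (fun j : Fin (Fintype.card G) => (j : ℕ) < k + 1)).card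
                  = ((A' i).filter (fun j : Fin (Fintype.card G) => (j : ℕ) < k)).card + 1 := by
                rw [hfilter_mem i hi0, Finset.card_insert_of_notMem (hjm_nf i)]
              omega
            · rw [hA2, Function.update_of_ne hi]
              exact le_trans (hI1 i) (hmono i)
          · intro i
            by_cases hi : i = i0
            · subst hi
              rw [hfilter_mem i hi0, Finset.sum_insert (hjm_nf i), hA2i0,
                Finset.sum_insert hgA]
              exact add_le_add hgval (hI4 i)
            · have hnm : jm ∉ A' i := fun h => hi (huniq_holder i h)
              rw [hfilter_not i hnm, hA2, Function.update_of_ne hi]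
              exact hI4 i
        · push_neg at hH
          refine ⟨A, ?_, hI2, hI3, ?_⟩
          · intro i
            exact le_trans (hI1 i) (hmono i)
          · intro i
            rw [hfilter_not i (hH i)]
            exact hI4 i
  obtain ⟨A, h1, h2, h3, h4⟩ := key (Fintype.card G) le_rfl
  refine ⟨A, h2, h3, ?_⟩
  intro i
  have h5 := h4 i
  rwa [Finset.filter_true_of_mem (fun j _ => j.isLt)] at h5
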